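/- For the bi-objective problem LOZR with f1 = LeadingOnes and f2 = ZeroRoyalRoad on bit-strings of length n = b·ℓ (b > 1, ℓ ≥ 2), a bit-string x is a non-global Pareto local optimum if and only if there exists i ∈ {0, 1, …, b−1} such that: LeadingOnes(x) = i·ℓ (so the first i blocks of x are all-ones), block S_{i+1} of x is all-zeros, no block S_j of x with j > i+1 contains exactly one one-bit, and x is not Pareto optimal (equivalently, some block S_j with j > i+1 is not an all-zeros block). -/
import Mathlib


open Finset

/-- Number of one-bits of a bit-string. -/
def onesCount {n : ℕ} (x : Fin n → Bool) : ℕ :=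
  (Finset.univ.filter fun i => x i = true).card

/-- Number of zero-bits of a bit-string. -/
def zerosCount {n : ℕ} (x : Fin n → Bool) : ℕ :=
  (Finset.univ.filter fun i => x i = false).card

/-- Number of leading one-bits. -/
def leadingOnes {n : ℕ} (x : Fin n → Bool) : ℕ :=
  (Finset.univ.filter fun i : Fin n => ∀ j : Fin n, j ≤ i → x j = true).card

/-- Number of trailing zero-bits. -/
def trailingZeroes {n : ℕ} (x : Fin n → Bool) : ℕ :=
  (Finset.univ.filter fun i : Fin n => ∀ j : Fin n, i ≤ j → x j = false).card

/-- `y` dominates `x` for the bi-objective maximisation problem `(f1, f2)`. -/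
def dominates {n : ℕ} (f1 f2 : (Fin n → Bool) → ℕ) (y x : Fin n → Bool) : Prop :=
  f1 x ≤ f1 y ∧ f2 x ≤ f2 y ∧ (f1 x < f1 y ∨ f2 x < f2 y)

/-- `x` is Pareto optimal: no solution dominates it. -/
def paretoOptimal {n : ℕ} (f1 f2 : (Fin n → Bool) → ℕ) (x : Fin n → Bool) : Prop :=
  ∀ y, ¬ dominates f1 f2 y x

/-- `x` is a non-global Pareto local optimum: not Pareto optimal, and not dominated by
any bit-string at Hamming distance exactly 1. -/
def nonGlobalParetoLocalOpt {n : ℕ} (f1 f2 : (Fin n → Bool) → ℕ) (x : Fin n → Bool) : Prop :=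
  ¬ paretoOptimal f1 f2 x ∧ ∀ y, hammingDist y x = 1 → ¬ dominates f1 f2 y x

/-- The ZeroJump function with jump parameter `k`. -/
def zeroJump (n k : ℕ) (x : Fin n → Bool) : ℕ :=
  if zerosCount x ≤ n - k ∨ x = (fun _ => false) then k + zerosCount x else n - zerosCount x

/-- The OneJump function with jump parameter `k`. -/
def oneJump (n k : ℕ) (x : Fin n → Bool) : ℕ :=
  if onesCount x ≤ n - k ∨ x = (fun _ => true) then k + onesCount x else n - onesCount x

/-- Block `j` (0-indexed) of the bit-string `x` (with `b` blocks of length `ℓ`) is all-ones. -/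
def blockAllOnes (b ℓ : ℕ) (x : Fin (b * ℓ) → Bool) (j : Fin b) : Prop :=
  ∀ i : Fin (b * ℓ), (i : ℕ) / ℓ = (j : ℕ) → x i = true

/-- Block `j` (0-indexed) of the bit-string `x` is all-zeros. -/
def blockAllZeros (b ℓ : ℕ) (x : Fin (b * ℓ) → Bool) (j : Fin b) : Prop :=
  ∀ i : Fin (b * ℓ), (i : ℕ) / ℓ = (j : ℕ) → x i = false

instance (b ℓ : ℕ) (x : Fin (b * ℓ) → Bool) (j : Fin b) : Decidable (blockAllOnes b ℓ x j) := by
  unfold blockAllOnes; infer_instance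

instance (b ℓ : ℕ) (x : Fin (b * ℓ) → Bool) (j : Fin b) : Decidable (blockAllZeros b ℓ x j) := by
  unfold blockAllZeros; infer_instance

/-- OneRoyalRoad: `ℓ` times the number of all-ones blocks. -/
def oneRoyalRoad (b ℓ : ℕ) (x : Fin (b * ℓ) → Bool) : ℕ :=
  ℓ * (Finset.univ.filter fun j : Fin b => blockAllOnes b ℓ x j).card

/-- ZeroRoyalRoad: `ℓ` times the number of all-zeros blocks. -/
def zeroRoyalRoad (b ℓ : ℕ) (x : Fin (b * ℓ) → Bool) : ℕ :=
  ℓ * (Finset.univ.filter fun j : Fin b => blockAllZeros b ℓ x j).card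

/-- Number of one-bits in block `j` of `x`. -/
def blockOnes (b ℓ : ℕ) (x : Fin (b * ℓ) → Bool) (j : Fin b) : ℕ :=
  (Finset.univ.filter fun i : Fin (b * ℓ) => (i : ℕ) / ℓ = (j : ℕ) ∧ x i = true).card

/-- Number of zero-bits in block `j` of `x`. -/
def blockZeros (b ℓ : ℕ) (x : Fin (b * ℓ) → Bool) (j : Fin b) : ℕ :=
  (Finset.univ.filter fun i : Fin (b * ℓ) => (i : ℕ) / ℓ = (j : ℕ) ∧ x i = false).card

section Helpers
variable {n : ℕ}

lemma lo_le (x : Fin n → Bool) : leadingOnes x ≤ n := by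
  classical
  have := Finset.card_filter_le Finset.univ (fun i : Fin n => ∀ j : Fin n, j ≤ i → x j = true)
  simpa [leadingOnes] using this

lemma lt_lo_iff (x : Fin n → Bool) (i : Fin n) :
    (i : ℕ) < leadingOnes x ↔ ∀ j : Fin n, j ≤ i → x j = true := by
  classical
  constructor
  · intro h
    by_contra hc
    have hsub : (Finset.univ.filter fun q : Fin n => ∀ j : Fin n, j ≤ q → x j = true) ⊆ Finset.Iio i := by
      intro q hq
      simp only [Finset.mem_filter, Finset.mem_univ, true_and] at hq
      by_contra hqi
      simp only [Finset.mem_Iio, not_lt] at hqi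
      exact hc (fun j hj => hq j (le_trans hj hqi))
    have := Finset.card_le_card hsub
    rw [Fin.card_Iio] at this
    exact absurd h (by simp [leadingOnes]; omega)
  · intro h
    have hsub : Finset.Iic i ⊆ (Finset.univ.filter fun q : Fin n => ∀ j : Fin n, j ≤ q → x j = true) := by
      intro q hq
      simp only [Finset.mem_Iic] at hq
      simp only [Finset.mem_filter, Finset.mem_univ, true_and]
      exact fun j hj => h j (le_trans hj hq)
    have := Finset.card_le_card hsub
    rw [Fin.card_Iic] at this
    simp only [leadingOnes]
    omega

lemma x_true_of_lt_lo (x : Fin n → Bool) (q : Fin n) (h : (q : ℕ) < leadingOnes x) :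
    x q = true := ((lt_lo_iff x q).1 h) q le_rfl

lemma lo_le_of_false (x : Fin n → Bool) (p : Fin n) (h : x p = false) :
    leadingOnes x ≤ (p : ℕ) := by
  classical
  have hsub : (Finset.univ.filter fun q : Fin n => ∀ j : Fin n, j ≤ q → x j = true) ⊆ Finset.Iio p := by
    intro q hq
    simp only [Finset.mem_filter, Finset.mem_univ, true_and] at hq
    by_contra hqi
    simp only [Finset.mem_Iio, not_lt] at hqi
    have := hq p hqi
    rw [h] at this; exact absurd this (by simp)
  have := Finset.card_le_card hsub
  rw [Fin.card_Iio] at this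
  simpa [leadingOnes] using this

lemma lo_eq_of (x : Fin n → Bool) (L : ℕ) (hL : L < n)
    (h1 : ∀ q : Fin n, (q : ℕ) < L → x q = true) (h2 : x ⟨L, hL⟩ = false) :
    leadingOnes x = L := by
  classical
  have hle := lo_le_of_false x ⟨L, hL⟩ h2
  simp only [Fin.val_mk] at hle
  have hlt : (⟨L, hL⟩ : Fin n) ≤ ⟨L, hL⟩ → L ≤ leadingOnes x := by
    intro _
    rcases Nat.eq_zero_or_pos L with h0 | h0
    · omega
    · have : (L - 1 : ℕ) < leadingOnes x := by
        rw [lt_lo_iff x ⟨L - 1, by omega⟩]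
        intro j hj
        exact h1 j (by have := Fin.le_def.1 hj; simp at this ⊢; omega)
      omega
  have := hlt le_rfl
  omega

lemma all_true_of_lo_eq (x : Fin n → Bool) (h : leadingOnes x = n) (i : Fin n) :
    x i = true := x_true_of_lt_lo x i (by rw [h]; exact i.isLt)

lemma pareto_top (f2 : (Fin n → Bool) → ℕ) (x : Fin n → Bool) (h : leadingOnes x = n) :
    paretoOptimal leadingOnes f2 x := by
  rintro y ⟨h1, h2, h3⟩
  have hy : leadingOnes y = n := le_antisymm (lo_le y) (by omega)
  have hyx : y = x := funext fun i => (all_true_of_lo_eq y hy i).trans (all_true_of_lo_eq x h i).symm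
  rw [hyx] at h3
  omega

lemma exists_update_of_ham1 (y x : Fin n → Bool) (h : hammingDist y x = 1) :
    ∃ p : Fin n, y p ≠ x p ∧ ∀ q : Fin n, q ≠ p → y q = x q := by
  classical
  have h' : (Finset.univ.filter fun i : Fin n => y i ≠ x i).card = 1 := h
  obtain ⟨p, hp⟩ := Finset.card_eq_one.1 h'
  refine ⟨p, ?_, ?_⟩
  · have : p ∈ (Finset.univ.filter fun i : Fin n => y i ≠ x i) := hp ▸ Finset.mem_singleton_self p
    simpa using this
  · intro q hq
    have : q ∉ (Finset.univ.filter fun i : Fin n => y i ≠ x i) := by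
      rw [hp]; simpa using hq
    simpa using this

lemma ham_update (x : Fin n → Bool) (p : Fin n) (v : Bool) (hv : v ≠ x p) :
    hammingDist (Function.update x p v) x = 1 := by
  classical
  show (Finset.univ.filter fun i : Fin n => Function.update x p v i ≠ x i).card = 1
  have : (Finset.univ.filter fun i : Fin n => Function.update x p v i ≠ x i) = {p} := by
    ext q
    simp only [Finset.mem_filter, Finset.mem_univ, true_and, Finset.mem_singleton]
    by_cases hq : q = p
    · subst hq; simp [Function.update_self, hv]
    · simp [Function.update_of_ne hq, hq]
  rw [this, Finset.card_singleton]

end Helpers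
section Blocks
variable {b ℓ : ℕ}

lemma baz_congr (hℓ : 0 < ℓ) (x y : Fin (b * ℓ) → Bool) (p : Fin (b * ℓ))
    (hagree : ∀ q, q ≠ p → y q = x q) (j : Fin b) (hj : (j : ℕ) ≠ (p : ℕ) / ℓ) :
    blockAllZeros b ℓ y j ↔ blockAllZeros b ℓ x j := by
  unfold blockAllZeros
  constructor <;> intro h q hq
  · rw [← hagree q (by rintro rfl; exact hj hq.symm)]; exact h q hq
  · rw [hagree q (by rintro rfl; exact hj hq.symm)]; exact h q hq

/-- generic: filters agreeing off `a` -/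
lemma zrr_le_of (x y : Fin (b * ℓ) → Bool) (a : Fin b)
    (hc : ∀ j : Fin b, j ≠ a → (blockAllZeros b ℓ x j ↔ blockAllZeros b ℓ y j))
    (hxa : ¬ blockAllZeros b ℓ x a) :
    zeroRoyalRoad b ℓ x ≤ zeroRoyalRoad b ℓ y := by
  classical
  unfold zeroRoyalRoad
  apply Nat.mul_le_mul_left
  apply Finset.card_le_card
  intro j hj
  simp only [Finset.mem_filter, Finset.mem_univ, true_and] at hj ⊢
  by_cases hja : j = a
  · subst hja; exact absurd hj hxa
  · exact (hc j hja).1 hj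

lemma zrr_eq_of (x y : Fin (b * ℓ) → Bool) (a : Fin b)
    (hc : ∀ j : Fin b, j ≠ a → (blockAllZeros b ℓ x j ↔ blockAllZeros b ℓ y j))
    (ha : blockAllZeros b ℓ x a ↔ blockAllZeros b ℓ y a) :
    zeroRoyalRoad b ℓ x = zeroRoyalRoad b ℓ y := by
  classical
  unfold zeroRoyalRoad
  congr 1
  congr 1
  apply Finset.filter_congr
  intro j _
  by_cases hja : j = a
  · subst hja; exact ha
  · exact hc j hja

lemma zrr_lt_of (hℓ : 0 < ℓ) (x y : Fin (b * ℓ) → Bool) (a : Fin b)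
    (hc : ∀ j : Fin b, j ≠ a → (blockAllZeros b ℓ x j ↔ blockAllZeros b ℓ y j))
    (hxa : ¬ blockAllZeros b ℓ x a) (hya : blockAllZeros b ℓ y a) :
    zeroRoyalRoad b ℓ x < zeroRoyalRoad b ℓ y := by
  classical
  unfold zeroRoyalRoad
  refine mul_lt_mul_of_pos_left ?_ hℓ
  apply Finset.card_lt_card
  constructor
  · intro j hj
    simp only [Finset.mem_filter, Finset.mem_univ, true_and] at hj ⊢
    by_cases hja : j = a
    · subst hja; exact absurd hj hxa
    · exact (hc j hja).1 hj
  · intro hsub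
    have : a ∈ Finset.univ.filter fun j : Fin b => blockAllZeros b ℓ x j := by
      apply hsub; simp [hya]
    simp only [Finset.mem_filter] at this
    exact hxa this.2
end Blocks
/-- For LOZR with b > 1 and ℓ ≥ 2: x is a non-global Pareto local optimum iff
there is i ∈ {0,…,b-1} such that LeadingOnes(x) = i·ℓ, block i (0-indexed, i.e. S_{i+1}) is
all-zeros, no later block contains exactly one one-bit, and x is not Pareto optimal. -/
theorem LOZR_local_opts (b ℓ : ℕ) (hb : 1 < b) (hℓ : 2 ≤ ℓ) (x : Fin (b * ℓ) → Bool) :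
    nonGlobalParetoLocalOpt leadingOnes (zeroRoyalRoad b ℓ) x ↔
      ∃ i : Fin b, leadingOnes x = (i : ℕ) * ℓ ∧
        blockAllZeros b ℓ x i ∧
        (∀ j : Fin b, i < j → blockOnes b ℓ x j ≠ 1) ∧
        ¬ paretoOptimal leadingOnes (zeroRoyalRoad b ℓ) x := by
  have hl0 : 0 < ℓ := by omega
  constructor
  · rintro ⟨hnp, hloc⟩
    have hLn : leadingOnes x < b * ℓ := by
      rcases lt_or_eq_of_le (lo_le x) with h | h
      · exact h
      · exact absurd (pareto_top _ x h) hnp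
    set L := leadingOnes x with hLdef
    set pL : Fin (b * ℓ) := ⟨L, hLn⟩ with hpLdef
    have hxL : x pL = false := by
      by_contra hc
      have hxL' : x pL = true := by revert hc; cases x pL <;> simp
      have hlt : (pL : ℕ) < leadingOnes x := by
        rw [lt_lo_iff]
        intro j hj
        rcases lt_or_eq_of_le hj with h | h
        · exact x_true_of_lt_lo x j (by simpa [Fin.lt_def, hpLdef] using h)
        · rw [h]; exact hxL'
      simp only [hpLdef, Fin.val_mk, ← hLdef] at hlt
      omega
    set i0 : ℕ := L / ℓ with hi0def
    have hi0b : i0 < b := (Nat.div_lt_iff_lt_mul hl0).2 hLn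
    set a : Fin b := ⟨i0, hi0b⟩ with hadef
    -- flip pL up
    set y : Fin (b * ℓ) → Bool := Function.update x pL true with hydef
    have hagree : ∀ q, q ≠ pL → y q = x q := fun q hq => Function.update_of_ne hq _ _
    have hham : hammingDist y x = 1 := ham_update x pL true (by simp [hxL])
    have hdom := hloc y hham
    have h1 : leadingOnes x < leadingOnes y := by
      have : (pL : ℕ) < leadingOnes y := by
        rw [lt_lo_iff]
        intro j hj
        rcases lt_or_eq_of_le hj with h | h
        · rw [hagree j (ne_of_lt h)]
          exact x_true_of_lt_lo x j (by simpa [Fin.lt_def, hpLdef] using h)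
        · rw [h, hydef]; exact Function.update_self _ _ _
      simpa [hpLdef, ← hLdef] using this
    have h2 : ¬ (zeroRoyalRoad b ℓ x ≤ zeroRoyalRoad b ℓ y) :=
      fun hle => hdom ⟨le_of_lt h1, hle, Or.inl h1⟩
    have hcong : ∀ j : Fin b, j ≠ a → (blockAllZeros b ℓ x j ↔ blockAllZeros b ℓ y j) := by
      intro j hj
      exact (baz_congr hl0 x y pL hagree j (by
        intro hc
        apply hj
        apply Fin.ext
        simpa [hpLdef, hadef, hi0def] using hc)).symm
    have hbazx : blockAllZeros b ℓ x a := by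
      by_contra hc
      exact h2 (zrr_le_of x y a hcong hc)
    have hdvd : L = i0 * ℓ := by
      have hm : i0 * ℓ ≤ L := Nat.div_mul_le_self L ℓ
      by_contra hc
      have hmlt : i0 * ℓ < L := by omega
      set q : Fin (b * ℓ) := ⟨i0 * ℓ, by omega⟩ with hqdef
      have hqt : x q = true := x_true_of_lt_lo x q (by simpa [hqdef, ← hLdef] using hmlt)
      have hqz : x q = false := hbazx q (by simp [hqdef, hadef, Nat.mul_div_cancel _ hl0])
      rw [hqt] at hqz; exact absurd hqz (by simp)
    refine ⟨a, by simpa [hadef] using hdvd, hbazx, ?_, hnp⟩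
    intro j hij hone
    obtain ⟨p, hp⟩ := Finset.card_eq_one.1 hone
    have hpmem : (p : ℕ) / ℓ = (j : ℕ) ∧ x p = true := by
      have := hp ▸ Finset.mem_singleton_self p
      simpa using this
    have huniq : ∀ q : Fin (b * ℓ), (q : ℕ) / ℓ = (j : ℕ) → x q = true → q = p := by
      intro q h1' h2'
      have : q ∈ (Finset.univ.filter fun i : Fin (b * ℓ) =>
          (i : ℕ) / ℓ = (j : ℕ) ∧ x i = true) := by simp [h1', h2']
      rw [hp] at this; simpa using this
    have hij' : i0 < (j : ℕ) := by simpa [hadef, Fin.lt_def] using hij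
    have hjp : (j : ℕ) * ℓ ≤ (p : ℕ) := by
      rw [← hpmem.1]; exact Nat.div_mul_le_self _ _
    have hstep : i0 * ℓ + ℓ ≤ (j : ℕ) * ℓ := by
      have := Nat.mul_le_mul_right ℓ (Nat.succ_le_of_lt hij')
      simpa [Nat.succ_mul] using this
    have hpL_lt : L < (p : ℕ) := by omega
    set z : Fin (b * ℓ) → Bool := Function.update x p false with hzdef
    have hzagree : ∀ q, q ≠ p → z q = x q := fun q hq => Function.update_of_ne hq _ _
    have hzham : hammingDist z x = 1 := ham_update x p false (by simp [hpmem.2])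
    have hzlo : leadingOnes z = L := by
      apply lo_eq_of z L hLn
      · intro q hq
        rw [hzagree q (by intro h; rw [h] at hq; omega)]
        exact x_true_of_lt_lo x q (by simpa [← hLdef] using hq)
      · rw [show (⟨L, hLn⟩ : Fin (b * ℓ)) = pL from rfl,
          hzagree pL (by intro h; apply absurd hpL_lt; rw [← h]; simp [hpLdef])]
        exact hxL
    have hzbaz : blockAllZeros b ℓ z j := by
      intro q hq
      by_cases hqp : q = p
      · subst hqp; rw [hzdef]; exact Function.update_self _ _ _
      · rw [hzagree q hqp]
        by_contra hc
        have : x q = true := by revert hc; cases x q <;> simp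
        exact hqp (huniq q hq this)
    have hxnbaz : ¬ blockAllZeros b ℓ x j := by
      intro hc
      have := hc p hpmem.1
      rw [hpmem.2] at this; exact absurd this (by simp)
    have hzcong : ∀ j' : Fin b, j' ≠ j → (blockAllZeros b ℓ x j' ↔ blockAllZeros b ℓ z j') := by
      intro j' hj'
      exact (baz_congr hl0 x z p hzagree j' (by
        intro hc; apply hj'; apply Fin.ext; rw [hc, hpmem.1])).symm
    have hzrr : zeroRoyalRoad b ℓ x < zeroRoyalRoad b ℓ z :=
      zrr_lt_of hl0 x z j hzcong hxnbaz hzbaz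
    exact hloc z hzham ⟨le_of_eq hzlo.symm, le_of_lt hzrr, Or.inr hzrr⟩
  · rintro ⟨i, hLi, hbaz, hone, hnp⟩
    refine ⟨hnp, ?_⟩
    intro y hham hdom
    obtain ⟨p, hne, hagree⟩ := exists_update_of_ham1 y x hham
    set L : ℕ := (i : ℕ) * ℓ with hLdef
    have hLn : L < b * ℓ := by
      have := Nat.mul_le_mul_right ℓ (Nat.succ_le_of_lt i.isLt)
      simp only [Nat.succ_mul] at this
      omega
    set pL : Fin (b * ℓ) := ⟨L, hLn⟩ with hpLdef
    have hxpL : x pL = false := hbaz pL (by simp [hpLdef, hLdef, Nat.mul_div_cancel _ hl0])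
    obtain ⟨d1, d2, d3⟩ := hdom
    by_cases hxp : x p = true
    · have hyp : y p = false := by revert hne; rw [hxp]; cases y p <;> simp
      by_cases hplt : (p : ℕ) < L
      · have := lo_le_of_false y p hyp
        rw [hLi] at d1
        omega
      · push_neg at hplt
        have hpj_ge : (i : ℕ) ≤ (p : ℕ) / ℓ := (Nat.le_div_iff_mul_le hl0).2 hplt
        have hpj_ne : (p : ℕ) / ℓ ≠ (i : ℕ) := by
          intro hc
          have := hbaz p hc
          rw [hxp] at this; exact absurd this (by simp)
        have hj0b : (p : ℕ) / ℓ < b := (Nat.div_lt_iff_lt_mul hl0).2 p.isLt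
        set j0 : Fin b := ⟨(p : ℕ) / ℓ, hj0b⟩ with hj0def
        have hij0 : i < j0 := by rw [Fin.lt_def]; simp [hj0def]; omega
        have hppL : p ≠ pL := by
          intro hc; rw [hc, hxpL] at hxp; exact absurd hxp (by simp)
        have hpgt : L < (p : ℕ) := by
          rcases lt_or_eq_of_le hplt with h | h
          · exact h
          · exact absurd (Fin.ext h.symm) hppL
        have hylo : leadingOnes y = L := by
          apply lo_eq_of y L hLn
          · intro q hq
            rw [hagree q (by intro h; rw [h] at hq; omega)]
            exact x_true_of_lt_lo x q (by rw [hLi]; exact hq)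
          · rw [show (⟨L, hLn⟩ : Fin (b * ℓ)) = pL from rfl, hagree pL (Ne.symm hppL)]
            exact hxpL
        have hxnbaz : ¬ blockAllZeros b ℓ x j0 := by
          intro hc
          have := hc p (by simp [hj0def])
          rw [hxp] at this; exact absurd this (by simp)
        have hynbaz : ¬ blockAllZeros b ℓ y j0 := by
          intro hc
          apply hone j0 hij0
          apply Finset.card_eq_one.2
          refine ⟨p, ?_⟩
          ext q
          simp only [Finset.mem_filter, Finset.mem_univ, true_and, Finset.mem_singleton]
          constructor
          · rintro ⟨hq1, hq2⟩
            by_contra hqp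
            have := hc q (by simp [hj0def, hq1])
            rw [hagree q hqp, hq2] at this
            exact absurd this (by simp)
          · rintro rfl; exact ⟨by simp [hj0def], hxp⟩
        have hcong : ∀ j : Fin b, j ≠ j0 → (blockAllZeros b ℓ x j ↔ blockAllZeros b ℓ y j) := by
          intro j hj
          exact (baz_congr hl0 x y p hagree j (by
            intro hc; exact hj (Fin.ext (by simp [hj0def, hc])))).symm
        have hzrr : zeroRoyalRoad b ℓ x = zeroRoyalRoad b ℓ y :=
          zrr_eq_of x y j0 hcong (iff_of_false hxnbaz hynbaz)
        rw [hLi, hylo] at d1 d3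
        omega
    · have hxp' : x p = false := by revert hxp; cases x p <;> simp
      have hyp : y p = true := by revert hne; rw [hxp']; cases y p <;> simp
      have hpge : L ≤ (p : ℕ) := by
        by_contra hc
        push_neg at hc
        have := x_true_of_lt_lo x p (by rw [hLi]; exact hc)
        rw [hxp'] at this; exact absurd this (by simp)
      by_cases hpeq : (p : ℕ) = L
      · have hppL : p = pL := Fin.ext hpeq
        have hynbaz : ¬ blockAllZeros b ℓ y i := by
          intro hc
          have := hc p (by rw [hpeq]; simp [hLdef, Nat.mul_div_cancel _ hl0])
          rw [hyp] at this; exact absurd this (by simp)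
        have hcong : ∀ j : Fin b, j ≠ i → (blockAllZeros b ℓ y j ↔ blockAllZeros b ℓ x j) := by
          intro j hj
          exact baz_congr hl0 x y p hagree j (by
            intro hc; exact hj (Fin.ext (by rw [hc, hpeq]; simp [hLdef, Nat.mul_div_cancel _ hl0])))
        have hzrr : zeroRoyalRoad b ℓ y < zeroRoyalRoad b ℓ x :=
          zrr_lt_of hl0 y x i hcong hynbaz hbaz
        omega
      · have hpgt : L < (p : ℕ) := by omega
        have hppL : p ≠ pL := by intro hc; rw [hc] at hpeq; exact hpeq rfl
        have hylo : leadingOnes y = L := by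
          apply lo_eq_of y L hLn
          · intro q hq
            rw [hagree q (by intro h; rw [h] at hq; omega)]
            exact x_true_of_lt_lo x q (by rw [hLi]; exact hq)
          · rw [show (⟨L, hLn⟩ : Fin (b * ℓ)) = pL from rfl, hagree pL (Ne.symm hppL)]
            exact hxpL
        have hj0b : (p : ℕ) / ℓ < b := (Nat.div_lt_iff_lt_mul hl0).2 p.isLt
        set j0 : Fin b := ⟨(p : ℕ) / ℓ, hj0b⟩ with hj0def
        have hynbaz : ¬ blockAllZeros b ℓ y j0 := by
          intro hc
          have := hc p (by simp [hj0def])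
          rw [hyp] at this; exact absurd this (by simp)
        have hcong : ∀ j : Fin b, j ≠ j0 → (blockAllZeros b ℓ y j ↔ blockAllZeros b ℓ x j) := by
          intro j hj
          exact baz_congr hl0 x y p hagree j (by
            intro hc; exact hj (Fin.ext (by simp [hj0def, hc])))
        have hzrr : zeroRoyalRoad b ℓ y ≤ zeroRoyalRoad b ℓ x :=
          zrr_le_of y x j0 hcong hynbaz
        rw [hLi, hylo] at d1 d3
        omega
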